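/- Let A : ℝ^n → ℝ^{N×m}, b : ℝ^n → ℝ^N be (L_A, L_b)-Lipschitz in ℓ∞ norms on D, U bounded by M in ℓ∞ norm, and c(x) = sup_{u∈U} min_i (A(x)u + b(x))_i. Suppose there exists x̄ ∈ D and η′ = λ^{-1} r̲ (L_A M + L_b)/2 for some 0 < λ < 1, r̲ > 0, such that c(x) ≥ η′ for all x ∈ D. Then for every x̄ ∈ D, every point x′ ∈ D with ‖x′ − x̄‖_∞ ≤ λ^{-1} r̲ / 2 satisfies: there exists u ∈ U with A(x′)u + b(x′) ≥ 0 componentwise. -/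
import Mathlib


/-- `ℓ∞` norm of a vector. -/
noncomputable def vecNormInf {N : ℕ} (v : Fin N → ℝ) : ℝ := ⨆ i, |v i|

/-- `ℓ∞ → ℓ∞` induced operator norm of a matrix (max absolute row sum). -/
noncomputable def matNormInf {N m : ℕ} (A : Matrix (Fin N) (Fin m) ℝ) : ℝ := ⨆ i, ∑ j, |A i j|

lemma abs_le_vecNormInf {N : ℕ} (v : Fin N → ℝ) (i : Fin N) : |v i| ≤ vecNormInf v :=
  le_ciSup (f := fun i => |v i|) (Set.Finite.bddAbove (Set.finite_range _)) i

lemma vecNormInf_nonneg {N : ℕ} (v : Fin N → ℝ) : 0 ≤ vecNormInf v :=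
  Real.iSup_nonneg fun _ => abs_nonneg _

lemma rowsum_le_matNormInf {N m : ℕ} (A : Matrix (Fin N) (Fin m) ℝ) (i : Fin N) :
    ∑ j, |A i j| ≤ matNormInf A :=
  le_ciSup (f := fun i => ∑ j, |A i j|) (Set.Finite.bddAbove (Set.finite_range _)) i

lemma matNormInf_nonneg {N m : ℕ} (A : Matrix (Fin N) (Fin m) ℝ) : 0 ≤ matNormInf A :=
  Real.iSup_nonneg fun _ => Finset.sum_nonneg fun _ _ => abs_nonneg _

lemma abs_mulVec_le {N m : ℕ} (A : Matrix (Fin N) (Fin m) ℝ) (v : Fin m → ℝ) (i : Fin N) :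
    |A.mulVec v i| ≤ matNormInf A * vecNormInf v := by
  calc |A.mulVec v i| = |∑ j, A i j * v j| := rfl
    _ ≤ ∑ j, |A i j * v j| := Finset.abs_sum_le_sum_abs _ _
    _ = ∑ j, |A i j| * |v j| := by simp [abs_mul]
    _ ≤ ∑ j, |A i j| * vecNormInf v := by
        refine Finset.sum_le_sum fun j _ => ?_
        exact mul_le_mul_of_nonneg_left (abs_le_vecNormInf v j) (abs_nonneg _)
    _ = (∑ j, |A i j|) * vecNormInf v := by rw [Finset.sum_mul]
    _ ≤ matNormInf A * vecNormInf v :=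
        mul_le_mul_of_nonneg_right (rowsum_le_matNormInf A i) (vecNormInf_nonneg v)

/-- robust compatibility with level `η' = λ⁻¹ r̲ (L_A M + L_b)/2` guarantees
that every point of `D` within `ℓ∞` distance `λ⁻¹ r̲ / 2` of a point of `D` admits a
feasible input. -/
theorem robust_level_checks_cube {n N m : ℕ}
    (D : Set (Fin n → ℝ))
    (A : (Fin n → ℝ) → Matrix (Fin N) (Fin m) ℝ)
    (b : (Fin n → ℝ) → (Fin N → ℝ))
    (LA Lb M : ℝ)
    (hA : ∀ x ∈ D, ∀ x' ∈ D, matNormInf (A x - A x') ≤ LA * vecNormInf (x - x'))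
    (hb : ∀ x ∈ D, ∀ x' ∈ D, vecNormInf (b x - b x') ≤ Lb * vecNormInf (x - x'))
    (U : Set (Fin m → ℝ)) (hU : ∀ u ∈ U, vecNormInf u ≤ M)
    (hpos : 0 < LA * M + Lb)
    (lam rbar : ℝ) (hlam₀ : 0 < lam) (hlam₁ : lam < 1) (hrbar : 0 < rbar)
    (hrobust : ∀ x ∈ D, ∃ u ∈ U,
      ∀ i, lam⁻¹ * rbar * (LA * M + Lb) / 2 ≤ (A x).mulVec u i + b x i) :
    ∀ x ∈ D, ∀ x' ∈ D, vecNormInf (x' - x) ≤ lam⁻¹ * rbar / 2 →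
      ∃ u ∈ U, ∀ i, 0 ≤ (A x').mulVec u i + b x' i := by
  intro x hx x' hx' hd
  obtain ⟨u, hu, hη⟩ := hrobust x hx
  refine ⟨u, hu, fun i => ?_⟩
  set d := vecNormInf (x' - x) with hdef
  have hM0 : 0 ≤ M := le_trans (vecNormInf_nonneg u) (hU u hu)
  have hd0 : 0 ≤ d := vecNormInf_nonneg _
  -- bound on the A perturbation
  have hA' : |(A x' - A x).mulVec u i| ≤ LA * d * M := by
    calc |(A x' - A x).mulVec u i| ≤ matNormInf (A x' - A x) * vecNormInf u :=
          abs_mulVec_le _ _ _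
      _ ≤ (LA * d) * M := by
          apply mul_le_mul (hA x' hx' x hx) (hU u hu) (vecNormInf_nonneg u)
          exact le_trans (matNormInf_nonneg _) (hA x' hx' x hx)
      _ = LA * d * M := rfl
  have hb' : |b x' i - b x i| ≤ Lb * d := by
    have := abs_le_vecNormInf (b x' - b x) i
    simpa using this.trans (hb x' hx' x hx)
  have hsplit : (A x').mulVec u i + b x' i =
      ((A x).mulVec u i + b x i) + ((A x' - A x).mulVec u i + (b x' i - b x i)) := by
    rw [Matrix.sub_mulVec]
    simp [Matrix.sub_apply]
    ring
  have hpert : |(A x' - A x).mulVec u i + (b x' i - b x i)| ≤ (LA * M + Lb) * d := by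
    calc |(A x' - A x).mulVec u i + (b x' i - b x i)|
        ≤ |(A x' - A x).mulVec u i| + |b x' i - b x i| := abs_add_le _ _
      _ ≤ LA * d * M + Lb * d := add_le_add hA' hb'
      _ = (LA * M + Lb) * d := by ring
  have hde : (LA * M + Lb) * d ≤ lam⁻¹ * rbar * (LA * M + Lb) / 2 := by
    calc (LA * M + Lb) * d ≤ (LA * M + Lb) * (lam⁻¹ * rbar / 2) :=
          mul_le_mul_of_nonneg_left hd hpos.le
      _ = lam⁻¹ * rbar * (LA * M + Lb) / 2 := by ring
  have h1 := hη i
  have h2 := neg_abs_le ((A x' - A x).mulVec u i + (b x' i - b x i))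
  rw [hsplit]
  nlinarith [hpert, hde]
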